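/- Let G be a connected r-regular simple graph with r ≥ 2, n vertices and m = nr/2 edges, with Laplacian characteristic polynomial φ(G; μ) = μⁿ + a₁μ^{n−1} + … + a_{n−2}μ² + a_{n−1}μ, and let L_RT be the Laplacian matrix of RT(G). Then the coefficient of μ² in det(μ·I_{m+3n} − L_RT) equals (−2)^(m−n)(−3)^n [ a_{n−2}(r+6)²(−1)^(n−2)(−3)^(n−2) + a_{n−1}(−r−5)(−1)^(n−1)(−3)^(n−1) + a_{n−1}(r+6)(n−1)(−1)^(n−2)(−3)^(n−1) + a_{n−1}(r+6)(−1)^(n−1)(n−1)(−3)^(n−2) ] + (m−n)(−2)^(m−n−1)(−3)^n a_{n−1}(r+6)(−1)^(n−1)(−3)^(n−1) + n(−3)^(n−1)(−2)^(m−n) a_{n−1}(r+6)(−1)^(n−1)(−3)^(n−1). -/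

import Mathlib

open Matrix SimpleGraph

/-- The Laplacian matrix of `RT(G)` in block form, given the vertex–edge incidence
matrix `B` of an `r`-regular graph `G` and its Laplacian matrix `L`.  The index type is
(edge-vertices of `G`) ⊕ (original vertices of `G`) ⊕ (pairs of new vertices). -/
def LRTMatrix {n m : ℕ} (r : ℕ) (B : Matrix (Fin n) (Fin m) ℝ)
    (L : Matrix (Fin n) (Fin n) ℝ) :
    Matrix (Fin m ⊕ Fin n ⊕ Fin n × Fin 2) (Fin m ⊕ Fin n ⊕ Fin n × Fin 2) ℝ :=
  fun i j =>
    match i, j with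
    | Sum.inl a, Sum.inl b => if a = b then 2 else 0
    | Sum.inl a, Sum.inr (Sum.inl v) => -(B v a)
    | Sum.inl _, Sum.inr (Sum.inr _) => 0
    | Sum.inr (Sum.inl v), Sum.inl a => -(B v a)
    | Sum.inr (Sum.inl v), Sum.inr (Sum.inl w) => L v w + (if v = w then (r : ℝ) + 2 else 0)
    | Sum.inr (Sum.inl v), Sum.inr (Sum.inr (w, _)) => if v = w then -1 else 0
    | Sum.inr (Sum.inr _), Sum.inl _ => 0
    | Sum.inr (Sum.inr (w, _)), Sum.inr (Sum.inl v) => if w = v then -1 else 0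
    | Sum.inr (Sum.inr (w, k)), Sum.inr (Sum.inr (w', k')) =>
        if w = w' then (if k = k' then 2 else -1) else 0


section Helpers
open Polynomial

lemma eval_charpoly' {ι : Type} [Fintype ι] [DecidableEq ι] (M : Matrix ι ι ℝ) (x : ℝ) :
    M.charpoly.eval x = (x • (1 : Matrix ι ι ℝ) - M).det := by
  rw [Matrix.charpoly, ← Polynomial.coe_evalRingHom, RingHom.map_det]
  congr 1
  ext i j
  by_cases h : i = j <;>
    simp [h, Matrix.charmatrix_apply, Matrix.one_apply, Matrix.diagonal_apply]

/-- block-diagonal with 2x2 blocks, indexed with the vertex first -/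
def vblock {n : ℕ} (d : Matrix (Fin 2) (Fin 2) ℝ) :
    Matrix (Fin n × Fin 2) (Fin n × Fin 2) ℝ :=
  fun p q => if p.1 = q.1 then d p.2 q.2 else 0

lemma vblock_mul {n : ℕ} (d e : Matrix (Fin 2) (Fin 2) ℝ) :
    (vblock (n := n) d) * vblock e = vblock (d * e) := by
  ext ⟨v, k⟩ ⟨w, k'⟩
  rw [Matrix.mul_apply, Fintype.sum_prod_type]
  simp only [vblock, ite_mul, zero_mul, mul_ite, mul_zero]
  by_cases h : v = w <;>
    simp [h, Finset.sum_ite_eq, Matrix.mul_apply]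
lemma vblock_one {n : ℕ} : (vblock (n := n) 1) = 1 := by
  ext ⟨v, k⟩ ⟨w, k'⟩
  simp only [vblock, Matrix.one_apply, Prod.ext_iff]
  by_cases h : v = w <;> by_cases h2 : k = k' <;> simp [h, h2]

lemma vblock_det {n : ℕ} (d : Matrix (Fin 2) (Fin 2) ℝ) :
    (vblock (n := n) d).det = d.det ^ n := by
  have : vblock (n := n) d
      = (Matrix.reindex (Equiv.prodComm (Fin 2) (Fin n)) (Equiv.prodComm (Fin 2) (Fin n)))
          (Matrix.blockDiagonal (fun _ : Fin n => d)) := by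
    ext ⟨v, k⟩ ⟨w, k'⟩
    by_cases h : v = w <;>
      simp [vblock, Matrix.blockDiagonal_apply, h, eq_comm]
  rw [this, Matrix.det_reindex_self, Matrix.det_blockDiagonal]
  simp


lemma det_xsmul_sub_LRT {n m : ℕ} (r : ℕ) (L : Matrix (Fin n) (Fin n) ℝ)
    (B : Matrix (Fin n) (Fin m) ℝ)
    (hBBt : ∀ v w, (∑ j, B v j * B w j) = (if v = w then (2 * r : ℝ) else 0) - L v w)
    (hmn : n ≤ m) (x : ℝ) (hx1 : x ≠ 1) (hx2 : x ≠ 2) (hx3 : x ≠ 3) :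
    (x • (1 : Matrix (Fin m ⊕ Fin n ⊕ Fin n × Fin 2) (Fin m ⊕ Fin n ⊕ Fin n × Fin 2) ℝ)
        - LRTMatrix r B L).det
      = (x - 2) ^ (m - n) * (x - 3) ^ n *
        ((x * (x ^ 2 - ((r : ℝ) + 5) * x + ((r : ℝ) + 6))) • (1 : Matrix (Fin n) (Fin n) ℝ)
          - ((x - 1) * (x - 3)) • L).det := by
  have hx1' : x - 1 ≠ 0 := sub_ne_zero.mpr hx1
  have hx2' : x - 2 ≠ 0 := sub_ne_zero.mpr hx2
  have hx3' : x - 3 ≠ 0 := sub_ne_zero.mpr hx3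
  have hq : (x - 1) * (x - 3) ≠ 0 := mul_ne_zero hx1' hx3'
  set q : ℝ := (x - 1) * (x - 3) with hqdef
  -- blocks
  set A₁ : Matrix (Fin m) (Fin m) ℝ := (x - 2) • 1 with hA₁
  set Bblk : Matrix (Fin m) (Fin n ⊕ Fin n × Fin 2) ℝ :=
    Matrix.of fun a j => Sum.elim (fun v => B v a) (fun _ => 0) j with hBblk
  set Cblk : Matrix (Fin n ⊕ Fin n × Fin 2) (Fin m) ℝ :=
    Matrix.of fun i a => Sum.elim (fun v => B v a) (fun _ => 0) i with hCblk
  set A₂ : Matrix (Fin n) (Fin n) ℝ :=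
    Matrix.of fun v w => (if v = w then x - ((r : ℝ) + 2) else 0) - L v w with hA₂
  set B₂ : Matrix (Fin n) (Fin n × Fin 2) ℝ := Matrix.of fun v p => if v = p.1 then 1 else 0 with hB₂
  set C₂ : Matrix (Fin n × Fin 2) (Fin n) ℝ := Matrix.of fun p v => if p.1 = v then 1 else 0 with hC₂
  set d : Matrix (Fin 2) (Fin 2) ℝ := Matrix.of fun k k' => if k = k' then x - 2 else 1 with hd
  set di : Matrix (Fin 2) (Fin 2) ℝ := !![(x - 2)/q, -1/q; -1/q, (x - 2)/q] with hdi
  set D₂ : Matrix (Fin n × Fin 2) (Fin n × Fin 2) ℝ := vblock d with hD₂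
  have step1 : x • (1 : Matrix (Fin m ⊕ Fin n ⊕ Fin n × Fin 2)
      (Fin m ⊕ Fin n ⊕ Fin n × Fin 2) ℝ) - LRTMatrix r B L
      = Matrix.fromBlocks A₁ Bblk Cblk (Matrix.fromBlocks A₂ B₂ C₂ D₂) := by
    ext i j
    rcases i with a | v | ⟨w, k⟩ <;> rcases j with b | v' | ⟨w', k'⟩ <;>
      simp [LRTMatrix, hA₁, hBblk, hCblk, hA₂, hB₂, hC₂, hD₂, hd, Matrix.one_apply, vblock,
        Prod.ext_iff, Matrix.smul_apply] <;>
      try (split_ifs <;> simp_all <;> try ring)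
  have hdd : d * di = 1 := by
    ext i j
    fin_cases i <;> fin_cases j <;>
      simp [hd, hdi, Matrix.mul_apply, Fin.sum_univ_two, Matrix.one_apply] <;>
      field_simp [hqdef] <;> ring
  have hdd2 : di * d = 1 := by
    ext i j
    fin_cases i <;> fin_cases j <;>
      simp [hd, hdi, Matrix.mul_apply, Fin.sum_univ_two, Matrix.one_apply] <;>
      field_simp [hqdef] <;> ring
  have hAr : A₁ * ((x - 2)⁻¹ • 1) = 1 := by
    rw [hA₁, Matrix.smul_mul, Matrix.mul_smul, Matrix.one_mul, smul_smul,
      mul_inv_cancel₀ hx2', one_smul]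
  have hAl : ((x - 2)⁻¹ • 1) * A₁ = 1 := by
    rw [hA₁, Matrix.smul_mul, Matrix.mul_smul, Matrix.one_mul, smul_smul,
      inv_mul_cancel₀ hx2', one_smul]
  have hDr : D₂ * vblock di = 1 := by rw [hD₂, vblock_mul, hdd, vblock_one]
  have hDl : vblock di * D₂ = 1 := by rw [hD₂, vblock_mul, hdd2, vblock_one]
  haveI iA : Invertible A₁ := ⟨(x - 2)⁻¹ • 1, hAl, hAr⟩
  haveI iD : Invertible D₂ := ⟨vblock di, hDl, hDr⟩
  rw [step1, Matrix.det_fromBlocks₁₁]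
  have hinvA : (⅟A₁ : Matrix (Fin m) (Fin m) ℝ) = (x - 2)⁻¹ • 1 := invOf_eq_right_inv hAr
  have hinvD : (⅟D₂ : Matrix (Fin n × Fin 2) (Fin n × Fin 2) ℝ) = vblock di :=
    invOf_eq_right_inv hDr
  -- the inner Schur complement
  set S₂ : Matrix (Fin n) (Fin n) ℝ :=
    Matrix.of fun v w => (if v = w then x - ((r : ℝ) + 2) else 0) - L v w
      - (x - 2)⁻¹ * ((if v = w then (2 * r : ℝ) else 0) - L v w) with hS₂
  have schur1 : Matrix.fromBlocks A₂ B₂ C₂ D₂ - Cblk * ⅟A₁ * Bblk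
      = Matrix.fromBlocks S₂ B₂ C₂ D₂ := by
    rw [hinvA]
    have hCB : Cblk * ((x - 2)⁻¹ • (1 : Matrix (Fin m) (Fin m) ℝ)) * Bblk
        = (x - 2)⁻¹ • (Cblk * Bblk) := by
      rw [Matrix.mul_smul, Matrix.mul_one, Matrix.smul_mul]
    rw [hCB]
    ext i j
    rcases i with v | ⟨w, k⟩ <;> rcases j with v' | ⟨w', k'⟩ <;>
      simp [Matrix.fromBlocks, Matrix.mul_apply, hBBt, hS₂, hA₂, hBblk, hCblk, hB₂, hC₂,
        hD₂, mul_comm, Matrix.smul_apply, Finset.mul_sum]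
  rw [schur1, Matrix.det_fromBlocks₂₂, hinvD]
  -- second Schur complement
  set S₃ : Matrix (Fin n) (Fin n) ℝ :=
    Matrix.of fun v w => S₂ v w - (if v = w then 2 * (x - 1)⁻¹ else 0) with hS₃
  have schur2 : S₂ - B₂ * vblock (n := n) di * C₂ = S₃ := by
    have hBD : B₂ * vblock (n := n) di * C₂ = (2 * (x - 1)⁻¹) • (1 : Matrix (Fin n) (Fin n) ℝ) := by
      ext v w
      by_cases h : v = w
      · simp [Matrix.mul_apply, Fintype.sum_prod_type, hB₂, hC₂, vblock, hdi, h,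
          Fin.sum_univ_two, Finset.sum_ite_eq, Matrix.smul_apply, Matrix.one_apply,
          Finset.mul_sum, Finset.sum_mul]
        field_simp [hqdef]
        ring
      · simp [Matrix.mul_apply, Fintype.sum_prod_type, hB₂, hC₂, vblock, hdi, h,
          Fin.sum_univ_two, Finset.sum_ite_eq, Matrix.smul_apply, Matrix.one_apply,
          Finset.mul_sum, Finset.sum_mul]
    rw [hBD]
    ext v w
    by_cases h : v = w <;> simp [hS₃, h, Matrix.smul_apply, Matrix.one_apply]
  rw [schur2]
  -- determinant of D₂ and A₁
  have hdetd : d.det = q := by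
    rw [Matrix.det_fin_two, hqdef]
    simp [hd]
    ring
  have hdetD₂ : D₂.det = q ^ n := by rw [hD₂, vblock_det, hdetd]
  have hdetA₁ : A₁.det = (x - 2) ^ m := by
    simp [hA₁, Matrix.det_smul, Fintype.card_fin]
  -- relate S₃ to the target matrix
  have key : ((x - 1) * (x - 2)) • S₃
      = (x * (x ^ 2 - ((r : ℝ) + 5) * x + ((r : ℝ) + 6))) • (1 : Matrix (Fin n) (Fin n) ℝ)
          - ((x - 1) * (x - 3)) • L := by
    ext v w
    by_cases h : v = w <;>
      · simp [hS₃, hS₂, h, Matrix.smul_apply, Matrix.one_apply, Matrix.sub_apply]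
        field_simp
        ring
  have hdetkey : ((x - 1) * (x - 2)) ^ n * S₃.det
      = ((x * (x ^ 2 - ((r : ℝ) + 5) * x + ((r : ℝ) + 6))) • (1 : Matrix (Fin n) (Fin n) ℝ)
          - ((x - 1) * (x - 3)) • L).det := by
    rw [← key, Matrix.det_smul, Fintype.card_fin]
  rw [hdetA₁, hdetD₂, ← hdetkey]
  have hpm : (x - 2) ^ m = (x - 2) ^ (m - n) * (x - 2) ^ n := by
    rw [← pow_add, Nat.sub_add_cancel hmn]
  rw [hpm, hqdef, mul_pow, mul_pow]
  ring

lemma charpoly_LRT_eq {n m : ℕ} (r : ℕ) (L : Matrix (Fin n) (Fin n) ℝ)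
    (B : Matrix (Fin n) (Fin m) ℝ)
    (hBBt : ∀ v w, (∑ j, B v j * B w j) = (if v = w then (2 * r : ℝ) else 0) - L v w)
    (hmn : n ≤ m) :
    (LRTMatrix r B L).charpoly
      = (X - C 2) ^ (m - n) * (X - C 3) ^ n *
          ∑ k ∈ Finset.range (n + 1), C (L.charpoly.coeff k) *
            (X * (X ^ 2 - C ((r : ℝ) + 5) * X + C ((r : ℝ) + 6))) ^ k *
            (X ^ 2 - C 4 * X + C 3) ^ (n - k) := by
  apply Polynomial.eq_of_infinite_eval_eq
  apply Set.Infinite.mono (s := Set.Ioi (3 : ℝ)) ?_ (Set.Ioi_infinite 3)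
  intro x hx
  simp only [Set.mem_Ioi] at hx
  have hx1 : x ≠ 1 := by intro h; rw [h] at hx; linarith
  have hx2 : x ≠ 2 := by intro h; rw [h] at hx; linarith
  have hx3 : x ≠ 3 := by intro h; rw [h] at hx; linarith
  have hp : x ^ 2 - 4 * x + 3 ≠ 0 := by
    have : x ^ 2 - 4 * x + 3 = (x - 1) * (x - 3) := by ring
    rw [this]
    exact mul_ne_zero (sub_ne_zero.mpr hx1) (sub_ne_zero.mpr hx3)
  show _ = Polynomial.eval x _
  rw [eval_charpoly', det_xsmul_sub_LRT r L B hBBt hmn x hx1 hx2 hx3]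
  rw [Polynomial.eval_mul, Polynomial.eval_mul, Polynomial.eval_pow, Polynomial.eval_pow,
    Polynomial.eval_finset_sum]
  simp only [Polynomial.eval_mul, Polynomial.eval_pow, Polynomial.eval_add,
    Polynomial.eval_sub, Polynomial.eval_X, Polynomial.eval_C]
  congr 1
  -- det (N₀ • 1 - p • L) = Σ c_k N₀^k p^(n-k)
  set N₀ : ℝ := x * (x ^ 2 - ((r : ℝ) + 5) * x + ((r : ℝ) + 6)) with hN₀
  set p : ℝ := x ^ 2 - 4 * x + 3 with hpdef
  have hfac : (x - 1) * (x - 3) = p := by rw [hpdef]; ring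
  have hmat : N₀ • (1 : Matrix (Fin n) (Fin n) ℝ) - ((x - 1) * (x - 3)) • L
      = p • ((N₀ / p) • (1 : Matrix (Fin n) (Fin n) ℝ) - L) := by
    rw [hfac, smul_sub, smul_smul, mul_div_cancel₀ _ hp]
  rw [hmat, Matrix.det_smul, Fintype.card_fin, ← eval_charpoly']
  have hdeg : (L.charpoly).natDegree < n + 1 := by
    rw [Matrix.charpoly_natDegree_eq_dim, Fintype.card_fin]; omega
  rw [Polynomial.eval_eq_sum_range' hdeg, Finset.mul_sum]
  refine Finset.sum_congr rfl fun k hk => ?_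
  have hk' : k ≤ n := Nat.lt_succ_iff.mp (Finset.mem_range.mp hk)
  have hsplit : p ^ n = p ^ k * p ^ (n - k) := by
    rw [← pow_add, Nat.add_sub_cancel' hk']
  rw [div_pow, hsplit]
  field_simp


lemma coeff0_mul (f g : ℝ[X]) : (f * g).coeff 0 = f.coeff 0 * g.coeff 0 :=
  Polynomial.mul_coeff_zero f g

lemma coeff0_pow (f : ℝ[X]) (j : ℕ) : (f ^ j).coeff 0 = f.coeff 0 ^ j := by
  rw [Polynomial.coeff_zero_eq_eval_zero, Polynomial.eval_pow,
    ← Polynomial.coeff_zero_eq_eval_zero]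

lemma coeff1_mul (f g : ℝ[X]) :
    (f * g).coeff 1 = f.coeff 0 * g.coeff 1 + f.coeff 1 * g.coeff 0 := by
  rw [Polynomial.coeff_mul, Finset.Nat.sum_antidiagonal_eq_sum_range_succ_mk]
  simp [Finset.sum_range_succ]

lemma coeff2_mul (f g : ℝ[X]) :
    (f * g).coeff 2 = f.coeff 0 * g.coeff 2 + f.coeff 1 * g.coeff 1
      + f.coeff 2 * g.coeff 0 := by
  rw [Polynomial.coeff_mul, Finset.Nat.sum_antidiagonal_eq_sum_range_succ_mk]
  simp [Finset.sum_range_succ]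

lemma coeff1_pow (f : ℝ[X]) (j : ℕ) :
    (f ^ j).coeff 1 = j * f.coeff 1 * f.coeff 0 ^ (j - 1) := by
  induction j with
  | zero => simp [Polynomial.coeff_one]
  | succ i ih =>
    rw [pow_succ, coeff1_mul, ih, coeff0_pow]
    cases i with
    | zero => simp
    | succ i' =>
      rw [Nat.add_sub_cancel] at *
      push_cast
      ring


lemma sum_range_peel3 {M : Type*} [AddCommMonoid M] (f : ℕ → M) (K : ℕ) :
    ∑ i ∈ Finset.range (K + 4), f i
      = (∑ i ∈ Finset.range (K + 1), f (i + 3)) + f 0 + f 1 + f 2 := by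
  rw [show K + 4 = (K + 3) + 1 by omega, Finset.sum_range_succ',
    show K + 3 = (K + 2) + 1 by omega, Finset.sum_range_succ',
    show K + 2 = (K + 1) + 1 by omega, Finset.sum_range_succ']
  have : ∀ i, f (i + 1 + 1 + 1) = f (i + 3) := fun i => by norm_num
  simp only [this]
  have h0 : (0 : ℕ) + 1 + 1 = 2 := rfl
  have h1 : (0 : ℕ) + 1 = 1 := rfl
  rw [h0, h1]
  abel


lemma BBt {n m : ℕ} (r : ℕ) (G : SimpleGraph (Fin n)) [DecidableRel G.Adj]
    (hreg : G.IsRegularOfDegree r)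
    (φ : Fin m ≃ G.edgeSet) (B : Matrix (Fin n) (Fin m) ℝ)
    (hB : ∀ (v : Fin n) (j : Fin m), B v j = if v ∈ (φ j : Sym2 (Fin n)) then 1 else 0)
    (v w : Fin n) :
    (∑ j, B v j * B w j)
      = (if v = w then (2 * r : ℝ) else 0) - G.lapMatrix ℝ v w := by
  classical
  have key : (∑ j, B v j * B w j)
      = ∑ e ∈ G.edgeFinset, (if v ∈ e ∧ w ∈ e then (1:ℝ) else 0) := by
    calc ∑ j, B v j * B w j
        = ∑ j, (fun e : G.edgeSet =>
            if v ∈ (e : Sym2 (Fin n)) ∧ w ∈ (e : Sym2 (Fin n)) then (1:ℝ) else 0) (φ j) := by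
          refine Finset.sum_congr rfl fun j _ => ?_
          rw [hB, hB]
          by_cases h1 : v ∈ (φ j : Sym2 (Fin n)) <;> by_cases h2 : w ∈ (φ j : Sym2 (Fin n)) <;>
            simp [h1, h2]
      _ = ∑ e : G.edgeSet,
            (if v ∈ (e : Sym2 (Fin n)) ∧ w ∈ (e : Sym2 (Fin n)) then (1:ℝ) else 0) :=
          Fintype.sum_equiv φ _ _ (fun j => rfl)
      _ = ∑ e ∈ G.edgeFinset, (if v ∈ e ∧ w ∈ e then (1:ℝ) else 0) :=
          Finset.sum_set_coe (f := fun e => if v ∈ e ∧ w ∈ e then (1:ℝ) else 0) G.edgeSet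
  rw [key]
  by_cases hvw : v = w
  · subst hvw
    have : ∑ e ∈ G.edgeFinset, (if v ∈ e ∧ v ∈ e then (1:ℝ) else 0)
        = ((G.edgeFinset.filter (fun e => v ∈ e)).card : ℝ) := by
      simp [Finset.sum_ite, Finset.filter_and]
    rw [this, ← SimpleGraph.incidenceFinset_eq_filter, SimpleGraph.card_incidenceFinset_eq_degree,
      hreg v]
    simp [SimpleGraph.lapMatrix, SimpleGraph.degMatrix, SimpleGraph.adjMatrix, hreg v]
    ring
  · have h1 : ∀ e ∈ G.edgeFinset, (if v ∈ e ∧ w ∈ e then (1:ℝ) else 0)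
        = if e = s(v,w) then 1 else 0 := by
      intro e _
      simp [Sym2.mem_and_mem_iff hvw]
    rw [Finset.sum_congr rfl h1, Finset.sum_ite_eq' G.edgeFinset (s(v,w)) (fun _ => (1:ℝ))]
    simp [SimpleGraph.mem_edgeFinset, SimpleGraph.lapMatrix, SimpleGraph.degMatrix,
      SimpleGraph.adjMatrix, hvw, Matrix.diagonal_apply]

end Helpers

theorem quadratic_coeff_charpoly_LRT {n m : ℕ} (r : ℕ) (hr : 2 ≤ r)
    (G : SimpleGraph (Fin n)) [DecidableRel G.Adj]
    (hconn : G.Connected) (hreg : G.IsRegularOfDegree r) (hm : 2 * m = n * r)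
    (φ : Fin m ≃ G.edgeSet) (B : Matrix (Fin n) (Fin m) ℝ)
    (hB : ∀ (v : Fin n) (j : Fin m), B v j = if v ∈ (φ j : Sym2 (Fin n)) then 1 else 0) :
    (LRTMatrix r B (G.lapMatrix ℝ)).charpoly.coeff 2
      = (-2 : ℝ) ^ ((m : ℤ) - (n : ℤ)) * (-3 : ℝ) ^ n *
          ( ((G.lapMatrix ℝ).charpoly.coeff 2) * ((r : ℝ) + 6) ^ 2 *
              (-1 : ℝ) ^ (n - 2) * (-3 : ℝ) ^ (n - 2)
            + ((G.lapMatrix ℝ).charpoly.coeff 1) * (-(r : ℝ) - 5) *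
              (-1 : ℝ) ^ (n - 1) * (-3 : ℝ) ^ (n - 1)
            + ((G.lapMatrix ℝ).charpoly.coeff 1) * ((r : ℝ) + 6) * ((n : ℝ) - 1) *
              (-1 : ℝ) ^ (n - 2) * (-3 : ℝ) ^ (n - 1)
            + ((G.lapMatrix ℝ).charpoly.coeff 1) * ((r : ℝ) + 6) *
              (-1 : ℝ) ^ (n - 1) * ((n : ℝ) - 1) * (-3 : ℝ) ^ (n - 2) )
        + ((m : ℝ) - (n : ℝ)) * (-2 : ℝ) ^ ((m : ℤ) - (n : ℤ) - 1) * (-3 : ℝ) ^ n *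
            ((G.lapMatrix ℝ).charpoly.coeff 1) * ((r : ℝ) + 6) *
            (-1 : ℝ) ^ (n - 1) * (-3 : ℝ) ^ (n - 1)
        + (n : ℝ) * (-3 : ℝ) ^ (n - 1) * (-2 : ℝ) ^ ((m : ℤ) - (n : ℤ)) *
            ((G.lapMatrix ℝ).charpoly.coeff 1) * ((r : ℝ) + 6) *
            (-1 : ℝ) ^ (n - 1) * (-3 : ℝ) ^ (n - 1) := by

  classical
  obtain ⟨v0⟩ := hconn.nonempty
  have hrn : r < n := by
    have h := G.degree_lt_card_verts v0
    rwa [hreg v0, Fintype.card_fin] at h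
  have hn3 : 3 ≤ n := by omega
  have hmn : n ≤ m := by
    have h1 : n * 2 ≤ n * r := Nat.mul_le_mul_left n hr
    have h2 : 2 * n ≤ 2 * m := by
      calc 2 * n = n * 2 := by ring
        _ ≤ n * r := h1
        _ = 2 * m := hm.symm
    omega
  set L := G.lapMatrix ℝ with hLdef
  have hBBt : ∀ v w, (∑ j, B v j * B w j)
      = (if v = w then (2 * r : ℝ) else 0) - L v w := BBt r G hreg φ B hB
  have c0 : L.charpoly.coeff 0 = 0 := by
    rw [Polynomial.coeff_zero_eq_eval_zero, eval_charpoly']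
    have hdet : L.det = 0 := by
      rw [← Matrix.exists_mulVec_eq_zero_iff]
      refine ⟨fun _ => 1, ?_, ?_⟩
      · intro h; exact one_ne_zero (congrFun h v0)
      · exact G.lapMatrix_mulVec_const_eq_zero
    have h0 : (0 : ℝ) • (1 : Matrix (Fin n) (Fin n) ℝ) - L = -L := by
      rw [zero_smul, zero_sub]
    rw [h0, Matrix.det_neg, hdet, mul_zero]
  have main := charpoly_LRT_eq r L B hBBt hmn
  obtain ⟨N, rfl⟩ : ∃ N, n = N + 3 := ⟨n - 3, by omega⟩
  obtain ⟨t, rfl⟩ : ∃ t, m = (N + 3) + t := ⟨m - (N + 3), by omega⟩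
  rw [show N + 3 + t - (N + 3) = t from by omega,
    show N + 3 + 1 = N + 4 from by omega] at main
  set c1 := L.charpoly.coeff 1 with hc1
  set c2 := L.charpoly.coeff 2 with hc2
  set qP : Polynomial ℝ := Polynomial.X ^ 2 - Polynomial.C ((r : ℝ) + 5) * Polynomial.X
      + Polynomial.C ((r : ℝ) + 6) with hqP
  set pP : Polynomial ℝ := Polynomial.X ^ 2 - Polynomial.C 4 * Polynomial.X
      + Polynomial.C 3 with hpP
  have hq0 : qP.coeff 0 = (r : ℝ) + 6 := by simp [hqP]
  have hq1 : qP.coeff 1 = -((r : ℝ) + 5) := by simp [hqP]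
  have hp0 : pP.coeff 0 = 3 := by simp [hpP]
  have hp1 : pP.coeff 1 = -4 := by simp [hpP]
  set F : Polynomial ℝ := ∑ k ∈ Finset.range (N + 4),
      Polynomial.C (L.charpoly.coeff k) * (Polynomial.X * qP) ^ k
        * pP ^ (N + 3 - k) with hFdef
  have hFsplit := sum_range_peel3
    (fun k => Polynomial.C (L.charpoly.coeff k) * (Polynomial.X * qP) ^ k
        * pP ^ (N + 3 - k)) N
  rw [← hFdef] at hFsplit
  simp only [pow_zero, pow_one, c0, map_zero, zero_mul, one_mul, mul_one, add_zero,
    Nat.sub_zero, show N + 3 - 1 = N + 2 from by omega,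
    show N + 3 - 2 = N + 1 from by omega] at hFsplit
  rw [← hc1, ← hc2] at hFsplit
  have hterm : ∀ (i : ℕ) (c : ℝ) (j dd : ℕ), dd ≤ 2 →
      (Polynomial.C c * (Polynomial.X * qP) ^ (i + 3) * pP ^ j).coeff dd = 0 := by
    intro i c j dd hdd
    have e : Polynomial.C c * (Polynomial.X * qP) ^ (i + 3) * pP ^ j
        = (Polynomial.C c * qP ^ (i + 3) * pP ^ j) * Polynomial.X ^ (i + 3) := by
      rw [mul_pow]; ring
    rw [e, Polynomial.coeff_mul_X_pow', if_neg (by omega)]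
  have hsumcoeff : ∀ dd : ℕ, dd ≤ 2 →
      (∑ i ∈ Finset.range (N + 1),
        Polynomial.C (L.charpoly.coeff (i + 3)) * (Polynomial.X * qP) ^ (i + 3)
          * pP ^ (N + 3 - (i + 3))).coeff dd = 0 := by
    intro dd hdd
    rw [Polynomial.finset_sum_coeff]
    exact Finset.sum_eq_zero fun i _ => hterm i _ _ dd hdd
  have e1 : Polynomial.C c1 * (Polynomial.X * qP) * pP ^ (N + 2)
      = (Polynomial.C c1 * qP * pP ^ (N + 2)) * Polynomial.X ^ 1 := by ring
  have e2 : Polynomial.C c2 * (Polynomial.X * qP) ^ 2 * pP ^ (N + 1)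
      = (Polynomial.C c2 * qP ^ 2 * pP ^ (N + 1)) * Polynomial.X ^ 2 := by
    rw [mul_pow]; ring
  have hF0 : F.coeff 0 = 0 := by
    rw [hFsplit]
    simp only [Polynomial.coeff_add, hsumcoeff 0 (by omega), e1, e2,
      Polynomial.coeff_mul_X_pow']
    norm_num
  have hg10 : (Polynomial.C c1 * qP * pP ^ (N + 2)).coeff 0
      = c1 * ((r : ℝ) + 6) * 3 ^ (N + 2) := by
    rw [coeff0_mul, coeff0_mul, coeff0_pow, Polynomial.coeff_C_zero, hq0, hp0]
  have hg11 : (Polynomial.C c1 * qP * pP ^ (N + 2)).coeff 1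
      = c1 * ((r : ℝ) + 6) * ((N : ℝ) + 2) * (-4) * 3 ^ (N + 1)
        + c1 * (-((r : ℝ) + 5)) * 3 ^ (N + 2) := by
    rw [coeff1_mul, coeff1_mul, coeff0_pow, coeff1_pow, coeff0_mul,
      Polynomial.coeff_C_zero, Polynomial.coeff_C, hq0, hq1, hp0, hp1,
      show N + 2 - 1 = N + 1 from by omega]
    push_cast
    norm_num
    ring
  have hg20 : (Polynomial.C c2 * qP ^ 2 * pP ^ (N + 1)).coeff 0
      = c2 * ((r : ℝ) + 6) ^ 2 * 3 ^ (N + 1) := by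
    rw [coeff0_mul, coeff0_mul, coeff0_pow, coeff0_pow, Polynomial.coeff_C_zero, hq0, hp0]
  have hF1 : F.coeff 1 = c1 * ((r : ℝ) + 6) * 3 ^ (N + 2) := by
    rw [hFsplit]
    simp only [Polynomial.coeff_add, hsumcoeff 1 (by omega), e1, e2,
      Polynomial.coeff_mul_X_pow']
    norm_num [hg10]
  have hF2 : F.coeff 2 = c1 * ((r : ℝ) + 6) * ((N : ℝ) + 2) * (-4) * 3 ^ (N + 1)
        + c1 * (-((r : ℝ) + 5)) * 3 ^ (N + 2)
        + c2 * ((r : ℝ) + 6) ^ 2 * 3 ^ (N + 1) := by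
    rw [hFsplit]
    simp only [Polynomial.coeff_add, hsumcoeff 2 (by omega), e1, e2,
      Polynomial.coeff_mul_X_pow']
    norm_num [hg11, hg20]
  -- coefficients of E = (X - C 2)^t * (X - C 3)^(N+3)
  have hxc : ∀ a : ℝ, (Polynomial.X - Polynomial.C a).coeff 0 = -a := by
    intro a; simp
  have hxc1 : ∀ a : ℝ, (Polynomial.X - Polynomial.C a).coeff 1 = 1 := by
    intro a; simp [Polynomial.coeff_X_one]
  have hE0 : ((Polynomial.X - Polynomial.C (2:ℝ)) ^ t
      * (Polynomial.X - Polynomial.C 3) ^ (N + 3)).coeff 0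
      = (-2) ^ t * (-3) ^ (N + 3) := by
    rw [coeff0_mul, coeff0_pow, coeff0_pow, hxc, hxc]
  have hE1 : ((Polynomial.X - Polynomial.C (2:ℝ)) ^ t
      * (Polynomial.X - Polynomial.C 3) ^ (N + 3)).coeff 1
      = (-2) ^ t * ((N : ℝ) + 3) * (-3) ^ (N + 2)
        + (t : ℝ) * (-2) ^ (t - 1) * (-3) ^ (N + 3) := by
    rw [coeff1_mul, coeff1_pow, coeff1_pow, coeff0_pow, coeff0_pow, hxc, hxc, hxc1, hxc1,
      show N + 3 - 1 = N + 2 from by omega]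
    push_cast
    norm_num
    ring
  -- put it together
  rw [main, coeff2_mul, hF0, hF1, hF2, hE0, hE1, mul_zero, add_zero]
  -- now the right-hand side
  rw [show ((N + 3 + t : ℕ) : ℤ) - ((N + 3 : ℕ) : ℤ) = (t : ℤ) from by push_cast; ring,
    zpow_natCast, show N + 3 - 1 = N + 2 from by omega,
    show N + 3 - 2 = N + 1 from by omega]
  rcases Nat.even_or_odd N with hN | hN
  · have h1 : (-1 : ℝ) ^ N = 1 := hN.neg_one_pow
    have h3 : (-3 : ℝ) ^ N = 3 ^ N := hN.neg_pow 3
    rcases t with _ | T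
    · simp only [pow_add, pow_one, h1, h3, Nat.cast_zero]
      push_cast
      ring
    · rw [show ((T + 1 : ℕ) : ℤ) - 1 = (T : ℤ) from by push_cast; ring, zpow_natCast]
      simp only [pow_add, pow_one, h1, h3]
      push_cast
      ring
  · have h1 : (-1 : ℝ) ^ N = -1 := hN.neg_one_pow
    have h3 : (-3 : ℝ) ^ N = -(3 ^ N) := hN.neg_pow 3
    rcases t with _ | T
    · simp only [pow_add, pow_one, h1, h3, Nat.cast_zero]
      push_cast
      ring
    · rw [show ((T + 1 : ℕ) : ℤ) - 1 = (T : ℤ) from by push_cast; ring, zpow_natCast]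
      simp only [pow_add, pow_one, h1, h3]
      push_cast
      ring
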